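/- Fix default costs α, β ∈ [0,1], a financial network, and a strategy profile s of the edge-removal game without cash injections, with maximal clearing payments P of the corresponding modified network. Let s' be obtained from s by a single bank i additionally removing a (nonempty) set of its incoming edges, and let P' be the maximal clearing payments of the network modified according to s'. If a_i(P') ≥ a_i(P), then a_k(P') ≥ a_k(P) for every bank k, and consequently the systemic liquidity satisfies F(P') ≥ F(P). -/

import Mathlib

open Finset

/-- `p` is a proportional clearing payment matrix for the network with external assets `e`,
liabilities `l` and default costs `α, β`. -/
def IsClearing {ι : Type*} [Fintype ι] (α β : ℝ) (e : ι → ℝ) (l : ι → ι → ℝ)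
    (p : ι → ι → ℝ) : Prop :=
  (∀ i j, 0 ≤ p i j) ∧ (∀ i j, p i j ≤ l i j) ∧
  (∀ i, (∑ j, l i j) ≤ e i + (∑ j, p j i) → ∀ j, p i j = l i j) ∧
  (∀ i, e i + (∑ j, p j i) < (∑ j, l i j) →
    ∀ j, p i j = (α * e i + β * (∑ k, p k i)) * l i j / (∑ k, l i k))

/-- `p` is the maximal clearing payment matrix. -/
def IsMaxClearing {ι : Type*} [Fintype ι] (α β : ℝ) (e : ι → ℝ) (l p : ι → ι → ℝ) : Prop :=
  IsClearing α β e l p ∧ ∀ q, IsClearing α β e l q → ∀ i j, q i j ≤ p i j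

/-- Systemic liquidity: the sum of all payments. -/
def liquidity {ι : Type*} [Fintype ι] (p : ι → ι → ℝ) : ℝ := ∑ i, ∑ j, p i j

/-- Total assets of bank `i` under payments `p`. -/
def assets {ι : Type*} [Fintype ι] (e : ι → ℝ) (p : ι → ι → ℝ) (i : ι) : ℝ :=
  e i + ∑ j, p j i

/-- The liabilities obtained from `l` when each bank `j` removes the incoming edges from
the banks in `s j`. -/
def removeEdges {ι : Type*} [DecidableEq ι] (l : ι → ι → ℝ) (s : ι → Finset ι) :
    ι → ι → ℝ :=
  fun i j => if i ∈ s j then 0 else l i j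

section Aux

variable {ι : Type*} [Fintype ι]

/-- The clearing operator. -/
noncomputable def phi (α β : ℝ) (e : ι → ℝ) (l : ι → ι → ℝ) (q : ι → ι → ℝ) : ι → ι → ℝ :=
  fun k j => if (∑ m, l k m) ≤ e k + ∑ m, q m k then l k j
    else (α * e k + β * (∑ m, q m k)) * l k j / (∑ m, l k m)

variable {α β : ℝ} {e : ι → ℝ} {l : ι → ι → ℝ}

lemma phi_nonneg (hα0 : 0 ≤ α) (hβ0 : 0 ≤ β) (he : ∀ i, 0 ≤ e i) (hl : ∀ i j, 0 ≤ l i j)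
    {q : ι → ι → ℝ} (hq : ∀ i j, 0 ≤ q i j) (k j : ι) : 0 ≤ phi α β e l q k j := by
  unfold phi
  split
  · exact hl k j
  · apply div_nonneg _ (Finset.sum_nonneg fun m _ => hl k m)
    exact mul_nonneg (add_nonneg (mul_nonneg hα0 (he k))
      (mul_nonneg hβ0 (Finset.sum_nonneg fun m _ => hq m k))) (hl k j)

lemma phi_le (hα1 : α ≤ 1) (hβ1 : β ≤ 1) (hα0 : 0 ≤ α) (hβ0 : 0 ≤ β)
    (he : ∀ i, 0 ≤ e i) (hl : ∀ i j, 0 ≤ l i j)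
    {q : ι → ι → ℝ} (hq : ∀ i j, 0 ≤ q i j) (k j : ι) : phi α β e l q k j ≤ l k j := by
  unfold phi
  split_ifs with h
  · exact le_refl _
  · have hin : 0 ≤ ∑ m, q m k := Finset.sum_nonneg fun m _ => hq m k
    have ha : 0 ≤ e k + ∑ m, q m k := add_nonneg (he k) hin
    have hL : 0 < ∑ m, l k m := lt_of_le_of_lt ha (not_le.1 h)
    have hc : α * e k + β * ∑ m, q m k ≤ ∑ m, l k m := by nlinarith [not_le.1 h, he k]
    rw [div_le_iff₀ hL]
    calc (α * e k + β * ∑ m, q m k) * l k j ≤ (∑ m, l k m) * l k j :=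
          mul_le_mul_of_nonneg_right hc (hl k j)
      _ = l k j * ∑ m, l k m := mul_comm _ _

lemma phi_mono (hα0 : 0 ≤ α) (hα1 : α ≤ 1) (hβ0 : 0 ≤ β) (hβ1 : β ≤ 1)
    (he : ∀ i, 0 ≤ e i) (hl : ∀ i j, 0 ≤ l i j)
    {q r : ι → ι → ℝ} (hq : ∀ i j, 0 ≤ q i j) (hqr : ∀ i j, q i j ≤ r i j)
    (k j : ι) : phi α β e l q k j ≤ phi α β e l r k j := by
  have hsum : (∑ m, q m k) ≤ ∑ m, r m k := Finset.sum_le_sum fun m _ => hqr m k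
  have hr : ∀ a b, 0 ≤ r a b := fun a b => (hq a b).trans (hqr a b)
  by_cases h1 : (∑ m, l k m) ≤ e k + ∑ m, q m k
  · have h2 : (∑ m, l k m) ≤ e k + ∑ m, r m k := h1.trans (by linarith)
    unfold phi
    rw [if_pos h1, if_pos h2]
  · by_cases h2 : (∑ m, l k m) ≤ e k + ∑ m, r m k
    · calc phi α β e l q k j ≤ l k j := phi_le hα1 hβ1 hα0 hβ0 he hl hq k j
        _ = phi α β e l r k j := by unfold phi; rw [if_pos h2]
    · have hin : 0 ≤ ∑ m, q m k := Finset.sum_nonneg fun m _ => hq m k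
      have hL : 0 < ∑ m, l k m :=
        lt_of_le_of_lt (add_nonneg (he k) hin) (not_le.1 h1)
      unfold phi
      rw [if_neg h1, if_neg h2]
      refine div_le_div₀ ?_ ?_ hL le_rfl
      · exact mul_nonneg (add_nonneg (mul_nonneg hα0 (he k))
          (mul_nonneg hβ0 (Finset.sum_nonneg fun m _ => hr m k))) (hl k j)
      · apply mul_le_mul_of_nonneg_right _ (hl k j)
        have := mul_le_mul_of_nonneg_left hsum hβ0
        linarith

lemma clearing_fix {p : ι → ι → ℝ} (hp : IsClearing α β e l p) :
    ∀ k j, phi α β e l p k j = p k j := by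
  intro k j
  unfold phi
  split_ifs with h
  · exact (hp.2.2.1 k h j).symm
  · exact (hp.2.2.2 k (not_le.1 h) j).symm

lemma clearing_of_fix {u : ι → ι → ℝ} (hu0 : ∀ k j, 0 ≤ u k j) (hul : ∀ k j, u k j ≤ l k j)
    (hfix : ∀ k j, phi α β e l u k j = u k j) : IsClearing α β e l u := by
  refine ⟨hu0, hul, fun k hk j => ?_, fun k hk j => ?_⟩
  · rw [← hfix k j]; unfold phi; rw [if_pos hk]
  · rw [← hfix k j]; unfold phi; rw [if_neg (not_le.2 hk)]

/-- Knaster–Tarski: any post-fixed point of the clearing operator is dominated by a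
clearing matrix. -/
lemma exists_clearing_ge (hα0 : 0 ≤ α) (hα1 : α ≤ 1) (hβ0 : 0 ≤ β) (hβ1 : β ≤ 1)
    (he : ∀ i, 0 ≤ e i) (hl : ∀ i j, 0 ≤ l i j)
    {q₀ : ι → ι → ℝ} (h0 : ∀ k j, 0 ≤ q₀ k j) (hb : ∀ k j, q₀ k j ≤ l k j)
    (hpost : ∀ k j, q₀ k j ≤ phi α β e l q₀ k j) :
    ∃ u, IsClearing α β e l u ∧ ∀ k j, q₀ k j ≤ u k j := by
  set A : Set (ι → ι → ℝ) :=
    {q | (∀ k j, 0 ≤ q k j) ∧ (∀ k j, q k j ≤ l k j) ∧ ∀ k j, q k j ≤ phi α β e l q k j}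
    with hA
  have hq₀A : q₀ ∈ A := ⟨h0, hb, hpost⟩
  set u : ι → ι → ℝ := fun k j => sSup ((fun q : ι → ι → ℝ => q k j) '' A) with hu
  have hbdd : ∀ k j, BddAbove ((fun q : ι → ι → ℝ => q k j) '' A) := by
    intro k j
    exact ⟨l k j, by rintro x ⟨q, hqA, rfl⟩; exact hqA.2.1 k j⟩
  have hmemle : ∀ q ∈ A, ∀ k j, q k j ≤ u k j := fun q hq k j =>
    le_csSup (hbdd k j) ⟨q, hq, rfl⟩
  have hu0 : ∀ k j, 0 ≤ u k j := fun k j => (h0 k j).trans (hmemle q₀ hq₀A k j)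
  have hul : ∀ k j, u k j ≤ l k j := fun k j =>
    csSup_le ⟨q₀ k j, q₀, hq₀A, rfl⟩ (by rintro x ⟨q, hq, rfl⟩; exact hq.2.1 k j)
  have hupost : ∀ k j, u k j ≤ phi α β e l u k j := by
    intro k j
    refine csSup_le ⟨q₀ k j, q₀, hq₀A, rfl⟩ ?_
    rintro x ⟨q, hq, rfl⟩
    exact (hq.2.2 k j).trans
      (phi_mono hα0 hα1 hβ0 hβ1 he hl hq.1 (fun a b => hmemle q hq a b) k j)
  have hphiA : phi α β e l u ∈ A := by
    refine ⟨phi_nonneg hα0 hβ0 he hl hu0, phi_le hα1 hβ1 hα0 hβ0 he hl hu0, fun k j => ?_⟩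
    exact phi_mono hα0 hα1 hβ0 hβ1 he hl hu0 hupost k j
  have hfix : ∀ k j, phi α β e l u k j = u k j := fun k j =>
    le_antisymm (hmemle _ hphiA k j) (hupost k j)
  exact ⟨u, clearing_of_fix hu0 hul hfix, fun k j => hmemle q₀ hq₀A k j⟩

end Aux

/-- In edge-removal games with default costs and no cash injections, if a single bank `i`
additionally removes a nonempty set `R` of its incoming edges and its total assets do not
decrease, then the total assets of every bank do not decrease; consequently the systemic
liquidity does not decrease. -/
theorem beneficial_removal_helps_everyone
    (ι : Type*) [Fintype ι] [DecidableEq ι]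
    (α β : ℝ) (hα₀ : 0 ≤ α) (hα₁ : α ≤ 1) (hβ₀ : 0 ≤ β) (hβ₁ : β ≤ 1)
    (e : ι → ℝ) (he : ∀ i, 0 ≤ e i)
    (l : ι → ι → ℝ) (hl : ∀ i j, 0 ≤ l i j) (hdiag : ∀ i, l i i = 0)
    (s : ι → Finset ι) (i : ι) (R : Finset ι) (hR : R.Nonempty)
    (P P' : ι → ι → ℝ)
    (hP : IsMaxClearing α β e (removeEdges l s) P)
    (hP' : IsMaxClearing α β e (removeEdges l (Function.update s i (s i ∪ R))) P')
    (hi : assets e P i ≤ assets e P' i) :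
    (∀ k, assets e P k ≤ assets e P' k) ∧ liquidity P ≤ liquidity P' := by
  classical
  obtain ⟨⟨hP0, hPl, hPs, hPd⟩, -⟩ := hP
  obtain ⟨hc', hmax'⟩ := hP'
  have hC' : IsClearing α β e (removeEdges l (Function.update s i (s i ∪ R))) P' := hc'
  obtain ⟨hP'0, hP'l, hP's, hP'd⟩ := hc'
  set s' := Function.update s i (s i ∪ R) with hs'
  set l1 := removeEdges l s with hl1def
  set l2 := removeEdges l s' with hl2def
  have hssub : ∀ j, s j ⊆ s' j := by
    intro j
    rcases eq_or_ne j i with rfl | hj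
    · rw [hs', Function.update_self]; exact subset_union_left
    · rw [hs', Function.update_of_ne hj]
  have hl10 : ∀ k j, 0 ≤ l1 k j := by
    intro k j; rw [hl1def]; unfold removeEdges; split
    · exact le_refl 0
    · exact hl k j
  have hl20 : ∀ k j, 0 ≤ l2 k j := by
    intro k j; rw [hl2def]; unfold removeEdges; split
    · exact le_refl 0
    · exact hl k j
  have hcol : ∀ k j, j ≠ i → l2 k j = l1 k j := by
    intro k j hj
    rw [hl1def, hl2def]; unfold removeEdges
    rw [hs', Function.update_of_ne hj]
  have hl2le : ∀ k j, l2 k j ≤ l1 k j := by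
    intro k j
    by_cases hk : k ∈ s j
    · have hk2 : k ∈ s' j := hssub j hk
      rw [hl1def, hl2def]; unfold removeEdges
      rw [if_pos hk, if_pos hk2]
    · by_cases hk2 : k ∈ s' j
      · rw [hl1def, hl2def]; unfold removeEdges
        rw [if_neg hk, if_pos hk2]; exact hl k j
      · rw [hl1def, hl2def]; unfold removeEdges
        rw [if_neg hk, if_neg hk2]
  have h2or : ∀ k j, l2 k j = l1 k j ∨ l2 k j = 0 := by
    intro k j
    by_cases hk2 : k ∈ s' j
    · right; rw [hl2def]; unfold removeEdges; rw [if_pos hk2]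
    · left
      have hk : k ∉ s j := fun h => hk2 (hssub j h)
      rw [hl1def, hl2def]; unfold removeEdges; rw [if_neg hk, if_neg hk2]
  have hL2le : ∀ k, (∑ m, l2 k m) ≤ ∑ m, l1 k m := fun k =>
    Finset.sum_le_sum fun m _ => hl2le k m
  -- the spliced matrix
  set pt : ι → ι → ℝ := fun k j => min (P k j) (l2 k j) with hptdef
  set q : ι → ι → ℝ := fun k j => max (pt k j) (P' k j) with hqdef
  have hq0 : ∀ k j, 0 ≤ q k j := fun k j => le_trans (hP'0 k j) (le_max_right _ _)
  have hql : ∀ k j, q k j ≤ l2 k j := fun k j => max_le (min_le_right _ _) (hP'l k j)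
  have hqP' : ∀ k j, P' k j ≤ q k j := fun k j => le_max_right _ _
  have hqP : ∀ k j, j ≠ i → P k j ≤ q k j := by
    intro k j hj
    have : pt k j = P k j := by
      rw [hptdef]
      exact min_eq_left (by rw [hcol k j hj]; exact hPl k j)
    rw [hqdef]
    calc P k j = pt k j := this.symm
      _ ≤ max (pt k j) (P' k j) := le_max_left _ _
  have hinq : ∀ k, (∑ m, P m k) ≤ ∑ m, q m k := by
    intro k
    rcases eq_or_ne k i with rfl | hk
    · have h1 : (∑ m, P' m k) ≤ ∑ m, q m k := Finset.sum_le_sum fun m _ => hqP' m k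
      have h2 : e k + (∑ m, P m k) ≤ e k + ∑ m, P' m k := hi
      linarith
    · exact Finset.sum_le_sum fun m _ => hqP m k hk
  -- q is a post-fixed point of the new clearing operator
  have hfixP' : ∀ a b, phi α β e l2 P' a b = P' a b := clearing_fix hC'
  have hpost : ∀ k j, q k j ≤ phi α β e l2 q k j := by
    intro k j
    have h1 : P' k j ≤ phi α β e l2 q k j := by
      calc P' k j = phi α β e l2 P' k j := (hfixP' k j).symm
        _ ≤ phi α β e l2 q k j := phi_mono hα₀ hα₁ hβ₀ hβ₁ he hl20 hP'0 hqP' k j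
    refine max_le ?_ h1
    by_cases hsolv : (∑ m, l2 k m) ≤ e k + ∑ m, q m k
    · have hphi : phi α β e l2 q k j = l2 k j := by unfold phi; rw [if_pos hsolv]
      rw [hphi]; exact min_le_right _ _
    · have hphi : phi α β e l2 q k j
          = (α * e k + β * ∑ m, q m k) * l2 k j / (∑ m, l2 k m) := by
        unfold phi; rw [if_neg hsolv]
      rcases h2or k j with h2 | h2
      · have hdefP : e k + (∑ m, P m k) < ∑ m, l1 k m := by
          have ha := not_le.1 hsolv
          have hb := hinq k
          have hc := hL2le k
          linarith
        have hPkj := hPd k hdefP j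
        have hL2pos : 0 < ∑ m, l2 k m :=
          lt_of_le_of_lt (add_nonneg (he k) (Finset.sum_nonneg fun m _ => hq0 m k))
            (not_le.1 hsolv)
        have hnum : (α * e k + β * ∑ m, P m k) * l1 k j
            ≤ (α * e k + β * ∑ m, q m k) * l1 k j := by
          apply mul_le_mul_of_nonneg_right _ (hl10 k j)
          have := mul_le_mul_of_nonneg_left (hinq k) hβ₀
          linarith
        have hnum0 : 0 ≤ (α * e k + β * ∑ m, q m k) * l1 k j :=
          mul_nonneg (add_nonneg (mul_nonneg hα₀ (he k))
            (mul_nonneg hβ₀ (Finset.sum_nonneg fun m _ => hq0 m k))) (hl10 k j)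
        have hcmp : (α * e k + β * ∑ m, P m k) * l1 k j / (∑ m, l1 k m)
            ≤ (α * e k + β * ∑ m, q m k) * l2 k j / (∑ m, l2 k m) := by
          rw [h2]
          exact div_le_div₀ hnum0 hnum hL2pos (hL2le k)
        calc pt k j ≤ P k j := min_le_left _ _
          _ = (α * e k + β * ∑ m, P m k) * l1 k j / (∑ m, l1 k m) := hPkj
          _ ≤ (α * e k + β * ∑ m, q m k) * l2 k j / (∑ m, l2 k m) := hcmp
          _ = phi α β e l2 q k j := hphi.symm
      · calc pt k j ≤ l2 k j := min_le_right _ _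
          _ = 0 := h2
          _ ≤ phi α β e l2 q k j := phi_nonneg hα₀ hβ₀ he hl20 hq0 k j
  obtain ⟨u, huC, hqu⟩ :=
    exists_clearing_ge hα₀ hα₁ hβ₀ hβ₁ he hl20 hq0 hql hpost
  have huP' : ∀ a b, u a b ≤ P' a b := hmax' u huC
  have hqleP' : ∀ a b, q a b ≤ P' a b := fun a b => (hqu a b).trans (huP' a b)
  have hassets : ∀ k, assets e P k ≤ assets e P' k := by
    intro k
    rcases eq_or_ne k i with rfl | hk
    · exact hi
    · unfold assets
      exact add_le_add_right
        (Finset.sum_le_sum fun m _ => (hqP m k hk).trans (hqleP' m k)) (e k)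
  refine ⟨hassets, ?_⟩
  have hsumP : (∑ k, assets e P k) = (∑ k, e k) + liquidity P := by
    unfold assets liquidity
    rw [Finset.sum_add_distrib, Finset.sum_comm]
  have hsumP' : (∑ k, assets e P' k) = (∑ k, e k) + liquidity P' := by
    unfold assets liquidity
    rw [Finset.sum_add_distrib, Finset.sum_comm]
  have := Finset.sum_le_sum fun k (_ : k ∈ Finset.univ) => hassets k
  linarith
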